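/- In the depth-2 Jones tower setup, the multiplication map A ⊗_k B → M₂, a ⊗ b ↦ ab, is injective with image exactly the centralizer C = C_{M₂}(N); likewise the multiplication map B ⊗_k A → M₂, b ⊗ a ↦ ba, is injective with image C. Thus C ≅ A ⊗_k B ≅ B ⊗_k A as k-vector spaces via multiplication. -/

import Mathlib

open scoped TensorProduct

/-- The depth-2 Jones tower setup: a tower `N ⊆ M ⊆ M₁ ⊆ R` (with `R` playing the
role of `M₂`) of unital `k`-algebras, with conditional expectations, Jones idempotents,
braid-like relations and depth-2 orthogonal dual bases, as in the paper. -/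
structure JonesTower (k : Type*) [Field k] (R : Type*) [Ring R] [Algebra k R] where
  N : Subalgebra k R
  M : Subalgebra k R
  M₁ : Subalgebra k R
  hNM : N ≤ M
  hMM₁ : M ≤ M₁
  lam : k
  hlam : lam ≠ 0
  E : R →ₗ[k] R
  EM : R →ₗ[k] R
  EM1 : R →ₗ[k] R
  hE_mem : ∀ m ∈ M, E m ∈ N
  hEM_mem : ∀ x ∈ M₁, EM x ∈ M
  hEM1_mem : ∀ x : R, EM1 x ∈ M₁
  hE_one : E 1 = 1
  hEM_one : EM 1 = 1
  hEM1_one : EM1 1 = 1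
  hE_bimod : ∀ n ∈ N, ∀ n' ∈ N, ∀ m ∈ M, E (n * m * n') = n * E m * n'
  hEM_bimod : ∀ m ∈ M, ∀ m' ∈ M, ∀ x ∈ M₁, EM (m * x * m') = m * EM x * m'
  hEM1_bimod : ∀ w ∈ M₁, ∀ w' ∈ M₁, ∀ x : R, EM1 (w * x * w') = w * EM1 x * w'
  n₀ : ℕ
  xb : Fin n₀ → R
  yb : Fin n₀ → R
  hxb : ∀ i, xb i ∈ M
  hyb : ∀ i, yb i ∈ M
  hE_dual₁ : ∀ m ∈ M, ∑ i, E (m * xb i) * yb i = m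
  hE_dual₂ : ∀ m ∈ M, ∑ i, xb i * E (yb i * m) = m
  hE_index : ∑ i, xb i * yb i = lam⁻¹ • (1 : R)
  hCMN : ∀ c ∈ M, (∀ n ∈ N, c * n = n * c) → ∃ μ : k, c = μ • (1 : R)
  hCM₁M : ∀ c ∈ M₁, (∀ m ∈ M, c * m = m * c) → ∃ μ : k, c = μ • (1 : R)
  hCM₂M₁ : ∀ c : R, (∀ w ∈ M₁, c * w = w * c) → ∃ μ : k, c = μ • (1 : R)
  e₁ : R
  e₂ : R
  he₁ : e₁ ∈ M₁
  he₁N : ∀ n ∈ N, e₁ * n = n * e₁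
  he₂M : ∀ m ∈ M, e₂ * m = m * e₂
  he₁me₁ : ∀ m ∈ M, e₁ * m * e₁ = E m * e₁
  he₂we₂ : ∀ w ∈ M₁, e₂ * w * e₂ = EM w * e₂
  hEMe₁ : EM e₁ = lam • (1 : R)
  hEM1e₂ : EM1 e₂ = lam • (1 : R)
  hspanM₁ : Subalgebra.toSubmodule M₁ =
    Submodule.span k {x : R | ∃ m ∈ M, ∃ m' ∈ M, x = m * e₁ * m'}
  hspanM₂ : (⊤ : Submodule k R) =
    Submodule.span k {x : R | ∃ w ∈ M₁, ∃ w' ∈ M₁, x = w * e₂ * w'}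
  hbraid₁ : e₁ * e₂ * e₁ = lam • e₁
  hbraid₂ : e₂ * e₁ * e₂ = lam • e₂
  r : ℕ
  zb : Fin r → R
  wb : Fin r → R
  hzbM₁ : ∀ i, zb i ∈ M₁
  hwbM₁ : ∀ i, wb i ∈ M₁
  hzbN : ∀ i, ∀ n ∈ N, zb i * n = n * zb i
  hwbN : ∀ i, ∀ n ∈ N, wb i * n = n * wb i
  hzw_orth : ∀ i j, EM (wb i * zb j) = if i = j then (1 : R) else 0
  hzw_dual₁ : ∀ x ∈ M₁, ∑ i, EM (x * zb i) * wb i = x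
  hzw_dual₂ : ∀ x ∈ M₁, ∑ i, zb i * EM (wb i * x) = x
  hzw_index : ∑ i, zb i * wb i = lam⁻¹ • (1 : R)
  s : ℕ
  ub : Fin s → R
  vb : Fin s → R
  hubM : ∀ i, ∀ m ∈ M, ub i * m = m * ub i
  hvbM : ∀ i, ∀ m ∈ M, vb i * m = m * vb i
  huv_orth : ∀ i j, EM1 (vb i * ub j) = if i = j then (1 : R) else 0
  huv_dual₁ : ∀ x : R, ∑ i, EM1 (x * ub i) * vb i = x
  huv_dual₂ : ∀ x : R, ∑ i, ub i * EM1 (vb i * x) = x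
  huv_index : ∑ i, ub i * vb i = lam⁻¹ • (1 : R)
  F : R →ₗ[k] k
  hF : ∀ c : R, (∀ n ∈ N, c * n = n * c) → algebraMap k R (F c) = EM (EM1 c)

variable {k : Type*} [Field k] {R : Type*} [Ring R] [Algebra k R]

/-- The second centralizer `A = C_{M₁}(N)`. -/
def JonesTower.A (T : JonesTower k R) : Subalgebra k R :=
  T.M₁ ⊓ Subalgebra.centralizer k (T.N : Set R)

/-- The second centralizer `B = C_{M₂}(M)`. -/
def JonesTower.B (T : JonesTower k R) : Subalgebra k R :=
  Subalgebra.centralizer k (T.M : Set R)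

/-- The big centralizer `C = C_{M₂}(N)`. -/
def JonesTower.C (T : JonesTower k R) : Subalgebra k R :=
  Subalgebra.centralizer k (T.N : Set R)

namespace JonesTower

variable (T : JonesTower k R)

lemma hNM₁ : T.N ≤ T.M₁ := T.hNM.trans T.hMM₁

lemma mem_B_iff (x : R) : x ∈ T.B ↔ ∀ m ∈ T.M, m * x = x * m :=
  Subalgebra.mem_centralizer_iff k

lemma mem_C_iff (x : R) : x ∈ T.C ↔ ∀ n ∈ T.N, n * x = x * n :=
  Subalgebra.mem_centralizer_iff k

lemma ub_mem_B (i : Fin T.s) : T.ub i ∈ T.B :=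
  (T.mem_B_iff _).2 fun m hm => (T.hubM i m hm).symm

lemma vb_mem_B (i : Fin T.s) : T.vb i ∈ T.B :=
  (T.mem_B_iff _).2 fun m hm => (T.hvbM i m hm).symm

/-- `EM1` of an element commuting with `M` is the scalar `F x`. -/
lemma EM1_scalar (x : R) (hx : ∀ m ∈ T.M, x * m = m * x) :
    T.EM1 x = algebraMap k R (T.F x) := by
  obtain ⟨μ, hμ⟩ := T.hCM₁M (T.EM1 x) (T.hEM1_mem x) (fun m hm => by
    have h1 := T.hEM1_bimod 1 (one_mem _) m (T.hMM₁ hm) x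
    have h2 := T.hEM1_bimod m (T.hMM₁ hm) 1 (one_mem _) x
    rw [one_mul, one_mul] at h1
    rw [mul_one, mul_one] at h2
    rw [← h1, ← h2, hx m hm])
  have hFx : algebraMap k R (T.F x) = T.EM (T.EM1 x) :=
    T.hF x (fun n hn => hx n (T.hNM hn))
  have h2 : T.EM (T.EM1 x) = T.EM1 x := by rw [hμ, map_smul, T.hEM_one]
  exact (hFx.trans h2).symm

lemma comm_M_mul_ub (b : R) (hb : b ∈ T.B) (j : Fin T.s) :
    ∀ m ∈ T.M, b * T.ub j * m = m * (b * T.ub j) := fun m hm =>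
  calc b * T.ub j * m = b * (T.ub j * m) := mul_assoc _ _ _
    _ = b * (m * T.ub j) := by rw [T.hubM j m hm]
    _ = b * m * T.ub j := (mul_assoc _ _ _).symm
    _ = m * b * T.ub j := by rw [← (T.mem_B_iff b).1 hb m hm]
    _ = m * (b * T.ub j) := mul_assoc _ _ _

lemma comm_M_vb_mul (b : R) (hb : b ∈ T.B) (j : Fin T.s) :
    ∀ m ∈ T.M, T.vb j * b * m = m * (T.vb j * b) := fun m hm =>
  calc T.vb j * b * m = T.vb j * (b * m) := mul_assoc _ _ _
    _ = T.vb j * (m * b) := by rw [← (T.mem_B_iff b).1 hb m hm]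
    _ = T.vb j * m * b := (mul_assoc _ _ _).symm
    _ = m * T.vb j * b := by rw [T.hvbM j m hm]
    _ = m * (T.vb j * b) := mul_assoc _ _ _

/-- Expansion of an element of `B` in terms of the `vb` with scalar coefficients. -/
lemma B_expand_v (b : R) (hb : b ∈ T.B) :
    ∑ i, T.F (b * T.ub i) • T.vb i = b := by
  conv_rhs => rw [← T.huv_dual₁ b]
  refine Finset.sum_congr rfl fun i _ => ?_
  rw [T.EM1_scalar _ (T.comm_M_mul_ub b hb i), ← Algebra.smul_def]

/-- Expansion of an element of `B` in terms of the `ub` with scalar coefficients. -/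
lemma B_expand_u (b : R) (hb : b ∈ T.B) :
    ∑ i, T.F (T.vb i * b) • T.ub i = b := by
  conv_rhs => rw [← T.huv_dual₂ b]
  refine Finset.sum_congr rfl fun i _ => ?_
  rw [T.EM1_scalar _ (T.comm_M_vb_mul b hb i), ← Algebra.commutes, ← Algebra.smul_def]

lemma EM1_mem_A (x : R) (hx : ∀ n ∈ T.N, n * x = x * n) : T.EM1 x ∈ T.A := by
  refine Algebra.mem_inf.2 ⟨T.hEM1_mem x, (Subalgebra.mem_centralizer_iff k).2
    fun n hn => ?_⟩
  have h1 := T.hEM1_bimod 1 (one_mem _) n (T.hNM₁ hn) x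
  have h2 := T.hEM1_bimod n (T.hNM₁ hn) 1 (one_mem _) x
  rw [one_mul, one_mul] at h1
  rw [mul_one, mul_one] at h2
  rw [← h1, ← h2, hx n hn]

lemma mul_ub_comm_N (c : R) (hc : c ∈ T.C) (i : Fin T.s) :
    ∀ n ∈ T.N, n * (c * T.ub i) = c * T.ub i * n := fun n hn =>
  calc n * (c * T.ub i) = n * c * T.ub i := (mul_assoc _ _ _).symm
    _ = c * n * T.ub i := by rw [(T.mem_C_iff c).1 hc n hn]
    _ = c * (n * T.ub i) := mul_assoc _ _ _
    _ = c * (T.ub i * n) := by rw [← T.hubM i n (T.hNM hn)]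
    _ = c * T.ub i * n := (mul_assoc _ _ _).symm

lemma vb_mul_comm_N (c : R) (hc : c ∈ T.C) (i : Fin T.s) :
    ∀ n ∈ T.N, n * (T.vb i * c) = T.vb i * c * n := fun n hn =>
  calc n * (T.vb i * c) = n * T.vb i * c := (mul_assoc _ _ _).symm
    _ = T.vb i * n * c := by rw [← T.hvbM i n (T.hNM hn)]
    _ = T.vb i * (n * c) := mul_assoc _ _ _
    _ = T.vb i * (c * n) := by rw [(T.mem_C_iff c).1 hc n hn]
    _ = T.vb i * c * n := (mul_assoc _ _ _).symm

lemma a_mem_M₁ {a : R} (ha : a ∈ T.A) : a ∈ T.M₁ := (Algebra.mem_inf.1 ha).1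

/-- Pulling an element of `M₁` out of `EM1` on the left. -/
lemma EM1_left (a : R) (ha : a ∈ T.M₁) (x : R) : T.EM1 (a * x) = a * T.EM1 x := by
  have := T.hEM1_bimod a ha 1 (one_mem _) x
  rwa [mul_one, mul_one] at this

/-- Pulling an element of `M₁` out of `EM1` on the right. -/
lemma EM1_right (a : R) (ha : a ∈ T.M₁) (x : R) : T.EM1 (x * a) = T.EM1 x * a := by
  have := T.hEM1_bimod 1 (one_mem _) a ha x
  rwa [one_mul, one_mul] at this

/-- The component-extraction map `A ⊗ B → A`, `a ⊗ b ↦ F(b uⱼ) • a`. -/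
noncomputable def piAB (j : Fin T.s) :
    (Subalgebra.toSubmodule T.A) ⊗[k] (Subalgebra.toSubmodule T.B) →ₗ[k]
      (Subalgebra.toSubmodule T.A) :=
  TensorProduct.lift <| LinearMap.mk₂ k
    (fun a b => T.F ((b : R) * T.ub j) • a)
    (fun a a' b => smul_add _ _ _)
    (fun c a b => smul_comm _ c _)
    (fun a b b' => by simp [add_mul, add_smul])
    (fun c a b => by simp [smul_mul_assoc, mul_smul])

@[simp] lemma piAB_tmul (j : Fin T.s) (a : Subalgebra.toSubmodule T.A)
    (b : Subalgebra.toSubmodule T.B) :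
    T.piAB j (a ⊗ₜ[k] b) = T.F ((b : R) * T.ub j) • a := rfl

/-- The component-extraction map `B ⊗ A → A`, `b ⊗ a ↦ F(vⱼ b) • a`. -/
noncomputable def piBA (j : Fin T.s) :
    (Subalgebra.toSubmodule T.B) ⊗[k] (Subalgebra.toSubmodule T.A) →ₗ[k]
      (Subalgebra.toSubmodule T.A) :=
  TensorProduct.lift <| LinearMap.mk₂ k
    (fun b a => T.F (T.vb j * (b : R)) • a)
    (fun b b' a => by simp [mul_add, add_smul])
    (fun c b a => by simp [mul_smul_comm, mul_smul])
    (fun b a a' => smul_add _ _ _)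
    (fun c b a => smul_comm _ c _)

@[simp] lemma piBA_tmul (j : Fin T.s) (b : Subalgebra.toSubmodule T.B)
    (a : Subalgebra.toSubmodule T.A) :
    T.piBA j (b ⊗ₜ[k] a) = T.F (T.vb j * (b : R)) • a := rfl

lemma piAB_eq (j : Fin T.s)
    (t : (Subalgebra.toSubmodule T.A) ⊗[k] (Subalgebra.toSubmodule T.B)) :
    (T.piAB j t : R) =
      T.EM1 (((Subalgebra.toSubmodule T.A).mulMap (Subalgebra.toSubmodule T.B)) t
        * T.ub j) := by
  induction t using TensorProduct.induction_on with
  | zero => simp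
  | tmul a b =>
    rw [piAB_tmul, Submodule.mulMap_tmul, SetLike.val_smul, mul_assoc,
      T.EM1_left _ (T.a_mem_M₁ a.2), T.EM1_scalar _ (T.comm_M_mul_ub _ b.2 j),
      Algebra.smul_def, Algebra.commutes]
  | add x y hx hy =>
    rw [map_add, map_add, Submodule.coe_add, add_mul, map_add, hx, hy]

lemma piBA_eq (j : Fin T.s)
    (t : (Subalgebra.toSubmodule T.B) ⊗[k] (Subalgebra.toSubmodule T.A)) :
    (T.piBA j t : R) =
      T.EM1 (T.vb j *
        ((Subalgebra.toSubmodule T.B).mulMap (Subalgebra.toSubmodule T.A)) t) := by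
  induction t using TensorProduct.induction_on with
  | zero => simp
  | tmul b a =>
    rw [piBA_tmul, Submodule.mulMap_tmul, SetLike.val_smul, ← mul_assoc,
      T.EM1_right _ (T.a_mem_M₁ a.2), T.EM1_scalar _ (T.comm_M_vb_mul _ b.2 j),
      Algebra.smul_def]
  | add x y hx hy =>
    rw [map_add, map_add, Submodule.coe_add, mul_add, map_add, hx, hy]

lemma decompAB
    (t : (Subalgebra.toSubmodule T.A) ⊗[k] (Subalgebra.toSubmodule T.B)) :
    t = ∑ j, (T.piAB j t) ⊗ₜ[k]
      (⟨T.vb j, T.vb_mem_B j⟩ : Subalgebra.toSubmodule T.B) := by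
  induction t using TensorProduct.induction_on with
  | zero => simp
  | tmul a b =>
    have key : ∑ j, T.F ((b : R) * T.ub j) •
        (⟨T.vb j, T.vb_mem_B j⟩ : Subalgebra.toSubmodule T.B) = b := by
      apply Subtype.ext
      rw [AddSubmonoidClass.coe_finset_sum]
      simpa using T.B_expand_v _ b.2
    conv_lhs => rw [← key]
    rw [TensorProduct.tmul_sum]
    exact Finset.sum_congr rfl fun j _ => (TensorProduct.smul_tmul _ _ _).symm
  | add x y hx hy =>
    conv_lhs => rw [hx, hy]
    simp [TensorProduct.add_tmul, Finset.sum_add_distrib]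

lemma decompBA
    (t : (Subalgebra.toSubmodule T.B) ⊗[k] (Subalgebra.toSubmodule T.A)) :
    t = ∑ j, (⟨T.ub j, T.ub_mem_B j⟩ : Subalgebra.toSubmodule T.B) ⊗ₜ[k]
      (T.piBA j t) := by
  induction t using TensorProduct.induction_on with
  | zero => simp
  | tmul b a =>
    have key : ∑ j, T.F (T.vb j * (b : R)) •
        (⟨T.ub j, T.ub_mem_B j⟩ : Subalgebra.toSubmodule T.B) = b := by
      apply Subtype.ext
      rw [AddSubmonoidClass.coe_finset_sum]
      simpa using T.B_expand_u _ b.2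
    conv_lhs => rw [← key]
    rw [TensorProduct.sum_tmul]
    exact Finset.sum_congr rfl fun j _ => TensorProduct.smul_tmul _ _ _
  | add x y hx hy =>
    conv_lhs => rw [hx, hy]
    simp [TensorProduct.tmul_add, Finset.sum_add_distrib]

end JonesTower

/-- The multiplication maps `A ⊗ₖ B → M₂` and `B ⊗ₖ A → M₂` are injective with
image exactly the big centralizer `C = C_{M₂}(N)`. -/
theorem C_is_A_tensor_B (T : JonesTower k R) [Nontrivial R] :
    (Function.Injective
        ((Subalgebra.toSubmodule T.A).mulMap (Subalgebra.toSubmodule T.B)) ∧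
      LinearMap.range
        ((Subalgebra.toSubmodule T.A).mulMap (Subalgebra.toSubmodule T.B)) =
        Subalgebra.toSubmodule T.C) ∧
    (Function.Injective
        ((Subalgebra.toSubmodule T.B).mulMap (Subalgebra.toSubmodule T.A)) ∧
      LinearMap.range
        ((Subalgebra.toSubmodule T.B).mulMap (Subalgebra.toSubmodule T.A)) =
        Subalgebra.toSubmodule T.C) := by
  have hAB : ∀ a ∈ T.A, ∀ b ∈ T.B, a * b ∈ T.C := by
    intro a ha b hb
    refine (T.mem_C_iff _).2 fun n hn => ?_
    have ha' : n * a = a * n :=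
      (Subalgebra.mem_centralizer_iff k).1 (Algebra.mem_inf.1 ha).2 n hn
    have hb' : n * b = b * n := (T.mem_B_iff b).1 hb n (T.hNM hn)
    calc n * (a * b) = n * a * b := (mul_assoc _ _ _).symm
      _ = a * n * b := by rw [ha']
      _ = a * (n * b) := mul_assoc _ _ _
      _ = a * (b * n) := by rw [hb']
      _ = a * b * n := (mul_assoc _ _ _).symm
  have hBA : ∀ b ∈ T.B, ∀ a ∈ T.A, b * a ∈ T.C := by
    intro b hb a ha
    refine (T.mem_C_iff _).2 fun n hn => ?_
    have ha' : n * a = a * n :=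
      (Subalgebra.mem_centralizer_iff k).1 (Algebra.mem_inf.1 ha).2 n hn
    have hb' : n * b = b * n := (T.mem_B_iff b).1 hb n (T.hNM hn)
    calc n * (b * a) = n * b * a := (mul_assoc _ _ _).symm
      _ = b * n * a := by rw [hb']
      _ = b * (n * a) := mul_assoc _ _ _
      _ = b * (a * n) := by rw [ha']
      _ = b * a * n := (mul_assoc _ _ _).symm
  have hr1 : LinearMap.range
      ((Subalgebra.toSubmodule T.A).mulMap (Subalgebra.toSubmodule T.B)) =
      Subalgebra.toSubmodule T.C := by
    rw [Submodule.mulMap_range]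
    refine le_antisymm (Submodule.mul_le.2 fun a ha b hb => ?_) fun c hc => ?_
    · exact (Subalgebra.mem_toSubmodule _).2
        (hAB a ((Subalgebra.mem_toSubmodule _).1 ha) b ((Subalgebra.mem_toSubmodule _).1 hb))
    · have hc' : c ∈ T.C := (Subalgebra.mem_toSubmodule _).1 hc
      rw [← T.huv_dual₁ c]
      exact Submodule.sum_mem _ fun i _ => Submodule.mul_mem_mul
        ((Subalgebra.mem_toSubmodule _).2 (T.EM1_mem_A _ (T.mul_ub_comm_N c hc' i)))
        ((Subalgebra.mem_toSubmodule _).2 (T.vb_mem_B i))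
  have hr2 : LinearMap.range
      ((Subalgebra.toSubmodule T.B).mulMap (Subalgebra.toSubmodule T.A)) =
      Subalgebra.toSubmodule T.C := by
    rw [Submodule.mulMap_range]
    refine le_antisymm (Submodule.mul_le.2 fun b hb a ha => ?_) fun c hc => ?_
    · exact (Subalgebra.mem_toSubmodule _).2
        (hBA b ((Subalgebra.mem_toSubmodule _).1 hb) a ((Subalgebra.mem_toSubmodule _).1 ha))
    · have hc' : c ∈ T.C := (Subalgebra.mem_toSubmodule _).1 hc
      rw [← T.huv_dual₂ c]
      exact Submodule.sum_mem _ fun i _ => Submodule.mul_mem_mul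
        ((Subalgebra.mem_toSubmodule _).2 (T.ub_mem_B i))
        ((Subalgebra.mem_toSubmodule _).2 (T.EM1_mem_A _ (T.vb_mul_comm_N c hc' i)))
  have hker1 : LinearMap.ker
      ((Subalgebra.toSubmodule T.A).mulMap (Subalgebra.toSubmodule T.B)) = ⊥ := by
    rw [Submodule.eq_bot_iff]
    intro t ht
    rw [LinearMap.mem_ker] at ht
    have hzero : ∀ j, T.piAB j t = 0 := fun j => Subtype.ext (by
      rw [T.piAB_eq j t, ht, zero_mul, map_zero, ZeroMemClass.coe_zero])
    calc t = ∑ j, (T.piAB j t) ⊗ₜ[k]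
        (⟨T.vb j, T.vb_mem_B j⟩ : Subalgebra.toSubmodule T.B) := T.decompAB t
      _ = 0 := by simp [hzero]
  have hker2 : LinearMap.ker
      ((Subalgebra.toSubmodule T.B).mulMap (Subalgebra.toSubmodule T.A)) = ⊥ := by
    rw [Submodule.eq_bot_iff]
    intro t ht
    rw [LinearMap.mem_ker] at ht
    have hzero : ∀ j, T.piBA j t = 0 := fun j => Subtype.ext (by
      rw [T.piBA_eq j t, ht, mul_zero, map_zero, ZeroMemClass.coe_zero])
    calc t = ∑ j, (⟨T.ub j, T.ub_mem_B j⟩ : Subalgebra.toSubmodule T.B) ⊗ₜ[k]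
        (T.piBA j t) := T.decompBA t
      _ = 0 := by simp [hzero]
  exact ⟨⟨(injective_iff_map_eq_zero _).2 fun t ht =>
    (Submodule.eq_bot_iff _).1 hker1 t (LinearMap.mem_ker.2 ht), hr1⟩,
    (injective_iff_map_eq_zero _).2 fun t ht =>
    (Submodule.eq_bot_iff _).1 hker2 t (LinearMap.mem_ker.2 ht), hr2⟩
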